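/- Let ((Δ_i)_{i≥0}, (ψ_i)_{i≥0}) be a 1-parameter formal deformation of a Coder pair (C, ψ_C). Then the pair (Δ_1, ψ_1) is a 2-cocycle of the Coder-pair complex of (C, ψ_C) with coefficients in the coadjoint bicomodule: δ_c(Δ_1) = 0 and δ_c(ψ_1) + ω(Δ_1) = 0. -/

import Mathlib

open TensorProduct LinearMap

variable {k C : Type} [Field k] [AddCommGroup C] [Module k C]

/-- `δ_c(g) = (Id_C ⊗ g) ∘ Δ − Δ ∘ g + (g ⊗ Id_C) ∘ Δ` for `g ∈ Hom(C, C)`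
(coadjoint coefficients). -/
noncomputable def delta1 (Δ : C →ₗ[k] C ⊗[k] C) (g : C →ₗ[k] C) : C →ₗ[k] C ⊗[k] C :=
  LinearMap.lTensor C g ∘ₗ Δ - Δ ∘ₗ g + LinearMap.rTensor C g ∘ₗ Δ

/-- `δ_c(f) = (Id_C ⊗ f) ∘ Δ − (Δ ⊗ Id_C) ∘ f + (Id_C ⊗ Δ) ∘ f − (f ⊗ Id_C) ∘ Δ`
for `f ∈ Hom(C, C ⊗ C)` (coadjoint coefficients). -/
noncomputable def delta2 (Δ : C →ₗ[k] C ⊗[k] C) (f : C →ₗ[k] C ⊗[k] C) :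
    C →ₗ[k] C ⊗[k] (C ⊗[k] C) :=
  LinearMap.lTensor C f ∘ₗ Δ
    - (TensorProduct.assoc k C C C).toLinearMap ∘ₗ LinearMap.rTensor C Δ ∘ₗ f
    + LinearMap.lTensor C Δ ∘ₗ f
    - (TensorProduct.assoc k C C C).toLinearMap ∘ₗ LinearMap.rTensor C f ∘ₗ Δ

/-- `ω(g) = ψ_C ∘ g − g ∘ ψ_C` for `g ∈ Hom(C, C)`. -/
noncomputable def omega1 (ψC : C →ₗ[k] C) (g : C →ₗ[k] C) : C →ₗ[k] C :=
  ψC ∘ₗ g - g ∘ₗ ψC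

/-- `ω(f) = (ψ_C ⊗ Id_C) ∘ f + (Id_C ⊗ ψ_C) ∘ f − f ∘ ψ_C` for `f ∈ Hom(C, C ⊗ C)`. -/
noncomputable def omega2 (ψC : C →ₗ[k] C) (f : C →ₗ[k] C ⊗[k] C) : C →ₗ[k] C ⊗[k] C :=
  LinearMap.rTensor C ψC ∘ₗ f + LinearMap.lTensor C ψC ∘ₗ f - f ∘ₗ ψC

/-- A 1-parameter formal deformation `(Δ_t = Σ Δ_i t^i, ψ_t = Σ ψ_i t^i)` of a Coder
pair `(C, ψ_C)`: `Δ_0 = Δ`, `ψ_0 = ψ_C`, and for every `k ≥ 0`,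
`Σ_{i+j=k} ((Id_C ⊗ Δ_i) ∘ Δ_j − (Δ_i ⊗ Id_C) ∘ Δ_j) = 0` and
`Σ_{i+j=k} (Δ_i ∘ ψ_j − (ψ_i ⊗ Id_C) ∘ Δ_j − (Id_C ⊗ ψ_i) ∘ Δ_j) = 0`. -/
noncomputable def IsFormalDeformation (Δ : C →ₗ[k] C ⊗[k] C) (ψC : C →ₗ[k] C)
    (Δs : ℕ → (C →ₗ[k] C ⊗[k] C)) (ψs : ℕ → (C →ₗ[k] C)) : Prop :=
  Δs 0 = Δ ∧ ψs 0 = ψC ∧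
  (∀ n : ℕ, ∑ p ∈ Finset.HasAntidiagonal.antidiagonal n, LinearMap.lTensor C (Δs p.1) ∘ₗ Δs p.2
      = ∑ p ∈ Finset.HasAntidiagonal.antidiagonal n,
          (TensorProduct.assoc k C C C).toLinearMap ∘ₗ LinearMap.rTensor C (Δs p.1) ∘ₗ Δs p.2) ∧
  (∀ n : ℕ, ∑ p ∈ Finset.HasAntidiagonal.antidiagonal n, Δs p.1 ∘ₗ ψs p.2
      = ∑ p ∈ Finset.HasAntidiagonal.antidiagonal n,
          (LinearMap.rTensor C (ψs p.1) ∘ₗ Δs p.2 + LinearMap.lTensor C (ψs p.1) ∘ₗ Δs p.2))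

/-- The infinitesimal `(Δ_1, ψ_1)` of a 1-parameter formal deformation of a Coder pair
`(C, ψ_C)` is a 2-cocycle of the Coder-pair complex with coefficients in the coadjoint
bicomodule: `δ_c(Δ_1) = 0` and `δ_c(ψ_1) + ω(Δ_1) = 0`. -/
theorem infinitesimal_is_two_cocycle [CharZero k]
    (Δ : C →ₗ[k] C ⊗[k] C)
    (hΔ : (TensorProduct.assoc k C C C).toLinearMap ∘ₗ LinearMap.rTensor C Δ ∘ₗ Δ
        = LinearMap.lTensor C Δ ∘ₗ Δ)
    (ψC : C →ₗ[k] C)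
    (hψC : Δ ∘ₗ ψC = LinearMap.rTensor C ψC ∘ₗ Δ + LinearMap.lTensor C ψC ∘ₗ Δ)
    (Δs : ℕ → (C →ₗ[k] C ⊗[k] C)) (ψs : ℕ → (C →ₗ[k] C))
    (hdef : IsFormalDeformation Δ ψC Δs ψs) :
    delta2 Δ (Δs 1) = 0 ∧ delta1 Δ (ψs 1) + omega2 ψC (Δs 1) = 0 := by
  obtain ⟨h0, h1, h2, h3⟩ := hdef
  have e2 := h2 1
  have e3 := h3 1
  have had : Finset.HasAntidiagonal.antidiagonal 1 = {((0:ℕ),(1:ℕ)), (1,0)} := by decide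
  rw [had, Finset.sum_pair (by decide), Finset.sum_pair (by decide)] at e2
  rw [had, Finset.sum_pair (by decide), Finset.sum_pair (by decide)] at e3
  simp only [h0, h1] at e2 e3
  constructor
  · unfold delta2
    rw [show LinearMap.lTensor C (Δs 1) ∘ₗ Δ = (TensorProduct.assoc k C C C).toLinearMap ∘ₗ LinearMap.rTensor C Δ ∘ₗ Δs 1 + (TensorProduct.assoc k C C C).toLinearMap ∘ₗ LinearMap.rTensor C (Δs 1) ∘ₗ Δ - LinearMap.lTensor C Δ ∘ₗ Δs 1 from by rw [← e2]; abel]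
    abel
  · unfold delta1 omega2
    have : Δ ∘ₗ ψs 1 = LinearMap.rTensor C ψC ∘ₗ Δs 1 + LinearMap.lTensor C ψC ∘ₗ Δs 1 + (LinearMap.rTensor C (ψs 1) ∘ₗ Δ + LinearMap.lTensor C (ψs 1) ∘ₗ Δ) - Δs 1 ∘ₗ ψC := by
      rw [← e3]; abel
    rw [this]; abel
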